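/- Let 𝕂 = ℝ or ℂ, suppose 𝒞 is nonempty and compact with constants R, K, let C ∈ S^{n×n} be the cost matrix, and let Y ∈ ℳ_k be an (ε_g,ε_H)-SOSP for some ε_g, ε_H ≥ 0. Then 0 ≤ ⟨CY, Y⟩ − f★ ≤ (ε_H + K·(2+KR)²·‖C‖_op·σ_k(Y)²)·R + (ε_g/2)·√R, where f★ = min_{X ∈ 𝒞} ⟨C, X⟩ and σ_k(Y) is the k-th (smallest) singular value of Y (taken to be 0 if k > n). -/

import Mathlib

open scoped Matrix BigOperators ComplexOrder
open MeasureTheory ProbabilityTheory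

noncomputable section

namespace SmoothedBM

variable {𝕂 : Type*} [RCLike 𝕂]

/-- Real Frobenius inner product `⟨A,B⟩ = Re tr(Aᴴ B)`. -/
def finner {n k : ℕ} (A B : Matrix (Fin n) (Fin k) 𝕂) : ℝ :=
  RCLike.re (Matrix.trace (Aᴴ * B))

/-- Frobenius norm. -/
def fnorm {n k : ℕ} (A : Matrix (Fin n) (Fin k) 𝕂) : ℝ :=
  Real.sqrt (finner A A)

/-- Spectral (operator) norm: the largest singular value, i.e. the square root of the
largest eigenvalue of `Aᴴ * A`. -/
def opNorm {n k : ℕ} (A : Matrix (Fin n) (Fin k) 𝕂) : ℝ :=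
  ⨆ i, Real.sqrt ((Matrix.isHermitian_conjTranspose_mul_self A).eigenvalues i)

/-- The `k`-th (smallest) singular value of an `n × k` matrix: the square root of the
smallest eigenvalue of `Yᴴ * Y`.  (It is `0` when `k > n`.) -/
def sigmaLast {n k : ℕ} (Y : Matrix (Fin n) (Fin k) 𝕂) : ℝ :=
  Real.sqrt (⨅ i, (Matrix.isHermitian_conjTranspose_mul_self Y).eigenvalues i)

/-- Squared singular values of an `n × n` matrix, sorted in increasing order
(eigenvalues of `Aᴴ * A`, sorted). -/
def svSqAsc {n : ℕ} (A : Matrix (Fin n) (Fin n) 𝕂) : Fin n → ℝ := fun i =>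
  (Matrix.isHermitian_conjTranspose_mul_self A).eigenvalues
    (Tuple.sort ((Matrix.isHermitian_conjTranspose_mul_self A).eigenvalues) i)

/-- Sum of the squares of the `k` smallest singular values of an `n × n` matrix. -/
def sumSqSmallestSV {n : ℕ} (k : ℕ) (A : Matrix (Fin n) (Fin n) 𝕂) : ℝ :=
  ∑ i : Fin n, if (i : ℕ) < k then svSqAsc A i else 0

open Classical in
/-- Smallest eigenvalue of a self-adjoint matrix (junk value `0` if not self-adjoint). -/
def lambdaMin {n : ℕ} (A : Matrix (Fin n) (Fin n) 𝕂) : ℝ :=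
  if hA : A.IsHermitian then ⨅ i, hA.eigenvalues i else 0

open Classical in
/-- Number of eigenvalues of a self-adjoint matrix lying in a set `I ⊆ ℝ`
(junk value `0` if not self-adjoint). -/
def eigCountIn {n : ℕ} (A : Matrix (Fin n) (Fin n) 𝕂) (I : Set ℝ) : ℕ :=
  if hA : A.IsHermitian then (Finset.univ.filter fun i => hA.eigenvalues i ∈ I).card else 0

variable {n m k : ℕ}

/-- The constraint map `𝒜(Z)ᵢ = ⟨Aᵢ, Z⟩`. -/
def calA (A : Fin m → Matrix (Fin n) (Fin n) 𝕂) (Z : Matrix (Fin n) (Fin n) 𝕂) :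
    Fin m → ℝ := fun i => finner (A i) Z

/-- The adjoint map `𝒜*(μ) = ∑ᵢ μᵢ Aᵢ`. -/
def calAstar (A : Fin m → Matrix (Fin n) (Fin n) 𝕂) (μ : Fin m → ℝ) :
    Matrix (Fin n) (Fin n) 𝕂 := ∑ i, (μ i : 𝕂) • A i

/-- The SDP feasible set `𝒞`. -/
def SDPSet (A : Fin m → Matrix (Fin n) (Fin n) 𝕂) (b : Fin m → ℝ) :
    Set (Matrix (Fin n) (Fin n) 𝕂) :=
  {X | X.PosSemidef ∧ ∀ i, finner (A i) X = b i}

/-- The factorized feasible set `ℳ_k`. -/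
def FactSet (A : Fin m → Matrix (Fin n) (Fin n) 𝕂) (b : Fin m → ℝ) (k : ℕ) :
    Set (Matrix (Fin n) (Fin k) 𝕂) :=
  {Y | ∀ i, finner (A i) (Y * Yᴴ) = b i}

/-- The Gram matrix `G(Y)ᵢⱼ = ⟨AᵢY, AⱼY⟩`. -/
def gram (A : Fin m → Matrix (Fin n) (Fin n) 𝕂) (Y : Matrix (Fin n) (Fin k) 𝕂) :
    Matrix (Fin m) (Fin m) ℝ :=
  Matrix.of fun i j => finner (A i * Y) (A j * Y)

/-- The four Moore–Penrose identities. -/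
def IsMoorePenrose {m : ℕ} (G H : Matrix (Fin m) (Fin m) ℝ) : Prop :=
  G * H * G = G ∧ H * G * H = H ∧ (G * H)ᵀ = G * H ∧ (H * G)ᵀ = H * G

open Classical in
/-- The Moore–Penrose pseudo-inverse (the unique matrix satisfying the four
Moore–Penrose identities; junk value `0` if none exists). -/
def pinv {m : ℕ} (G : Matrix (Fin m) (Fin m) ℝ) : Matrix (Fin m) (Fin m) ℝ :=
  if h : ∃ H, IsMoorePenrose G H then h.choose else 0

/-- The matrix `S(Y) = C − 𝒜*(G(Y)† 𝒜(C Y Yᴴ))`. -/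
def Smat (A : Fin m → Matrix (Fin n) (Fin n) 𝕂) (C : Matrix (Fin n) (Fin n) 𝕂)
    (Y : Matrix (Fin n) (Fin k) 𝕂) : Matrix (Fin n) (Fin n) 𝕂 :=
  C - calAstar A (pinv (gram A Y) *ᵥ calA A (C * (Y * Yᴴ)))

/-- `Y` is an `εg`-approximate first-order stationary point of the factorized problem. -/
def IsFOSP (A : Fin m → Matrix (Fin n) (Fin n) 𝕂) (b : Fin m → ℝ)
    (C : Matrix (Fin n) (Fin n) 𝕂) (Y : Matrix (Fin n) (Fin k) 𝕂) (εg : ℝ) : Prop :=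
  Y ∈ FactSet A b k ∧ fnorm ((2 : 𝕂) • (Smat A C Y * Y)) ≤ εg

/-- `Y` is an `(εg, εH)`-approximate second-order stationary point of the factorized problem. -/
def IsSOSP (A : Fin m → Matrix (Fin n) (Fin n) 𝕂) (b : Fin m → ℝ)
    (C : Matrix (Fin n) (Fin n) 𝕂) (Y : Matrix (Fin n) (Fin k) 𝕂) (εg εH : ℝ) : Prop :=
  IsFOSP A b C Y εg ∧
    ∀ V : Matrix (Fin n) (Fin k) 𝕂, (∀ i, finner (A i * Y) V = 0) →
      -εH * (fnorm V) ^ 2 ≤ finner V (Smat A C Y * V)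

/-- The smooth-manifold assumption (Assumption 1). -/
def SmoothAssumption (A : Fin m → Matrix (Fin n) (Fin n) 𝕂) (b : Fin m → ℝ) : Prop :=
  ∀ k' : ℕ, k' ≤ n → (FactSet A b k').Nonempty →
    (∀ Y ∈ FactSet A b k', LinearIndependent ℝ fun i => A i * Y) ∨
    (∃ U : Set (Matrix (Fin n) (Fin k') 𝕂), IsOpen U ∧ FactSet A b k' ⊆ U ∧
      ∃ d : ℕ, ∀ Y ∈ U,
        Module.finrank ℝ (Submodule.span ℝ (Set.range fun i => A i * Y)) = d)

/-- A real Gaussian Wigner matrix with variance `σ²`: a random real symmetric matrix whose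
on-and-above-diagonal entries are independent centered Gaussians `N(0, σ²)`. -/
structure IsRealWigner {Ω : Type*} [MeasurableSpace Ω] (μ : Measure Ω) {n : ℕ} (σ : ℝ)
    (W : Ω → Matrix (Fin n) (Fin n) ℝ) : Prop where
  symm : ∀ ω, (W ω)ᵀ = W ω
  meas : ∀ i j, Measurable fun ω => W ω i j
  indep : iIndepFun (m := fun _ : {p : Fin n × Fin n // p.1 ≤ p.2} => (inferInstance : MeasurableSpace ℝ))
    (fun p ω => W ω p.val.1 p.val.2) μ
  gauss : ∀ i j : Fin n, i ≤ j →
    Measure.map (fun ω => W ω i j) μ = gaussianReal 0 ⟨σ ^ 2, sq_nonneg σ⟩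

/-- The independent real coordinates of a complex Hermitian random matrix:
diagonal entries, and real/imaginary parts of the above-diagonal entries. -/
def wignerParts {Ω : Type*} {n : ℕ} (W : Ω → Matrix (Fin n) (Fin n) ℂ) :
    (Fin n ⊕ {p : Fin n × Fin n // p.1 < p.2} × Bool) → Ω → ℝ
  | Sum.inl i => fun ω => (W ω i i).re
  | Sum.inr (p, false) => fun ω => (W ω p.val.1 p.val.2).re
  | Sum.inr (p, true) => fun ω => (W ω p.val.1 p.val.2).im

/-- A complex Gaussian Wigner matrix with variance `σ²`: a random Hermitian matrix whose
on-and-above-diagonal entries are independent, the diagonal entries being real `N(0, σ²)` and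
the above-diagonal entries having independent `N(0, σ²/2)` real and imaginary parts. -/
structure IsComplexWigner {Ω : Type*} [MeasurableSpace Ω] (μ : Measure Ω) {n : ℕ} (σ : ℝ)
    (W : Ω → Matrix (Fin n) (Fin n) ℂ) : Prop where
  herm : ∀ ω, (W ω).IsHermitian
  meas : ∀ i j, Measurable fun ω => W ω i j
  indep : iIndepFun (m := fun _ : Fin n ⊕ {p : Fin n × Fin n // p.1 < p.2} × Bool => (inferInstance : MeasurableSpace ℝ))
    (wignerParts W) μ
  diag : ∀ i : Fin n,
    Measure.map (fun ω => (W ω i i).re) μ = gaussianReal 0 ⟨σ ^ 2, sq_nonneg σ⟩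
  off_re : ∀ i j : Fin n, i < j →
    Measure.map (fun ω => (W ω i j).re) μ = gaussianReal 0 ⟨σ ^ 2 / 2, by positivity⟩
  off_im : ∀ i j : Fin n, i < j →
    Measure.map (fun ω => (W ω i j).im) μ = gaussianReal 0 ⟨σ ^ 2 / 2, by positivity⟩



set_option linter.unusedSectionVars false
set_option maxHeartbeats 1000000


/-- embedding of matrices into Euclidean space -/
def mE {n k : ℕ} (A : Matrix (Fin n) (Fin k) 𝕂) : EuclideanSpace 𝕂 (Fin n × Fin k) :=
  (WithLp.equiv 2 _).symm (fun p => A p.1 p.2)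


lemma finner_eq_inner {n k : ℕ} (A B : Matrix (Fin n) (Fin k) 𝕂) :
    finner A B = RCLike.re (inner 𝕂 (mE A) (mE B)) := by
  rw [finner, Matrix.trace]
  congr 1
  rw [PiLp.inner_apply, Fintype.sum_prod_type]
  simp [Matrix.diag, Matrix.mul_apply, Matrix.conjTranspose_apply, mE, RCLike.inner_apply,
    Finset.sum_comm (γ := Fin k)]
  exact Finset.sum_congr rfl fun _ _ => Finset.sum_congr rfl fun _ _ => mul_comm _ _

lemma fnorm_eq_norm {n k : ℕ} (A : Matrix (Fin n) (Fin k) 𝕂) : fnorm A = ‖mE A‖ := by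
  rw [fnorm, finner_eq_inner, inner_self_eq_norm_sq (𝕜 := 𝕂), Real.sqrt_sq (norm_nonneg _)]

variable {n k : ℕ}
set_option linter.unusedSectionVars false

lemma mE_add (A B : Matrix (Fin n) (Fin k) 𝕂) : mE (A + B) = mE A + mE B := rfl
lemma mE_sub (A B : Matrix (Fin n) (Fin k) 𝕂) : mE (A - B) = mE A - mE B := rfl
lemma mE_smul (c : 𝕂) (A : Matrix (Fin n) (Fin k) 𝕂) : mE (c • A) = c • mE A := rfl
lemma mE_zero : mE (0 : Matrix (Fin n) (Fin k) 𝕂) = 0 := rfl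
lemma mE_inj {A B : Matrix (Fin n) (Fin k) 𝕂} (h : mE A = mE B) : A = B := by
  ext i j
  exact congrFun (congrArg (WithLp.equiv 2 _) h) (i, j)

lemma finner_comm (A B : Matrix (Fin n) (Fin k) 𝕂) : finner A B = finner B A := by
  rw [finner_eq_inner, finner_eq_inner, ← inner_conj_symm (mE A) (mE B), RCLike.conj_re]

lemma finner_add_right (A B C : Matrix (Fin n) (Fin k) 𝕂) :
    finner A (B + C) = finner A B + finner A C := by
  simp [finner_eq_inner, mE_add, inner_add_right]

lemma finner_sub_right (A B C : Matrix (Fin n) (Fin k) 𝕂) :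
    finner A (B - C) = finner A B - finner A C := by
  simp [finner_eq_inner, mE_sub, inner_sub_right]

lemma finner_sub_left (A B C : Matrix (Fin n) (Fin k) 𝕂) :
    finner (A - B) C = finner A C - finner B C := by
  rw [finner_comm, finner_sub_right, finner_comm A C, finner_comm B C]

lemma finner_smul_right (c : ℝ) (A B : Matrix (Fin n) (Fin k) 𝕂) :
    finner A ((c : 𝕂) • B) = c * finner A B := by
  rw [finner_eq_inner, finner_eq_inner, mE_smul, inner_smul_right]
  simp [RCLike.smul_re]

lemma finner_smul_left (c : ℝ) (A B : Matrix (Fin n) (Fin k) 𝕂) :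
    finner ((c : 𝕂) • A) B = c * finner A B := by
  rw [finner_comm, finner_smul_right, finner_comm]

lemma finner_add_left (A B C : Matrix (Fin n) (Fin k) 𝕂) :
    finner (A + B) C = finner A C + finner B C := by
  rw [finner_comm, finner_add_right, finner_comm A C, finner_comm B C]

lemma finner_sum_left {m : ℕ} (A : Fin m → Matrix (Fin n) (Fin k) 𝕂)
    (B : Matrix (Fin n) (Fin k) 𝕂) (μ : Fin m → ℝ) :
    finner (∑ i, (μ i : 𝕂) • A i) B = ∑ i, μ i * finner (A i) B := by
  classical
  induction (Finset.univ : Finset (Fin m)) using Finset.induction_on with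
  | empty => simp [finner, Matrix.conjTranspose_zero, Matrix.zero_mul]
  | @insert a s h ih =>
      rw [Finset.sum_insert h, Finset.sum_insert h, finner_add_left, ih, finner_smul_left]

lemma finner_self_nonneg (A : Matrix (Fin n) (Fin k) 𝕂) : 0 ≤ finner A A := by
  rw [finner_eq_inner]; exact inner_self_nonneg (𝕜 := 𝕂)

lemma fnorm_nonneg (A : Matrix (Fin n) (Fin k) 𝕂) : 0 ≤ fnorm A := Real.sqrt_nonneg _

lemma sq_fnorm (A : Matrix (Fin n) (Fin k) 𝕂) : fnorm A ^ 2 = finner A A := by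
  rw [fnorm, Real.sq_sqrt (finner_self_nonneg A)]

lemma eq_zero_of_finner_self (A : Matrix (Fin n) (Fin k) 𝕂) (h : finner A A = 0) : A = 0 := by
  rw [finner_eq_inner] at h
  have : mE A = 0 := by
    have := inner_self_eq_zero (𝕜 := 𝕂) (x := mE A)
    rw [← this]
    have h2 : (inner 𝕂 (mE A) (mE A)) = RCLike.re (inner 𝕂 (mE A) (mE A)) := by
      exact (RCLike.conj_eq_iff_re.mp (inner_self_conj _)).symm
    rw [h2, h]; simp
  apply mE_inj
  simpa [mE_zero] using this

lemma abs_finner_le (A B : Matrix (Fin n) (Fin k) 𝕂) : |finner A B| ≤ fnorm A * fnorm B := by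
  rw [finner_eq_inner, fnorm_eq_norm, fnorm_eq_norm]
  exact (RCLike.abs_re_le_norm _).trans (norm_inner_le_norm _ _)

lemma finner_le (A B : Matrix (Fin n) (Fin k) 𝕂) : finner A B ≤ fnorm A * fnorm B :=
  (le_abs_self _).trans (abs_finner_le A B)

lemma fnorm_real_smul (c : ℝ) (A : Matrix (Fin n) (Fin k) 𝕂) :
    fnorm ((c : 𝕂) • A) = |c| * fnorm A := by
  rw [fnorm_eq_norm, fnorm_eq_norm, mE_smul, norm_smul]
  simp [RCLike.norm_ofReal]

lemma fnorm_conjTranspose (A : Matrix (Fin n) (Fin k) 𝕂) : fnorm Aᴴ = fnorm A := by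
  have : finner Aᴴ Aᴴ = finner A A := by
    rw [finner, finner, Matrix.conjTranspose_conjTranspose, Matrix.trace_mul_comm]
  rw [fnorm, fnorm, this]


def vE {n : ℕ} (x : Fin n → 𝕂) : EuclideanSpace 𝕂 (Fin n) := (WithLp.equiv 2 _).symm x
def vnorm {n : ℕ} (x : Fin n → 𝕂) : ℝ := ‖vE x‖


lemma inner_vE (x y : Fin n → 𝕂) :
    (inner 𝕂 (vE x) (vE y)) = dotProduct (star x) y :=
  (EuclideanSpace.inner_toLp_toLp x y).trans (dotProduct_comm _ _)

lemma vnorm_nonneg (x : Fin n → 𝕂) : 0 ≤ vnorm x := norm_nonneg _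

lemma vnorm_sq (x : Fin n → 𝕂) :
    vnorm x ^ 2 = RCLike.re (dotProduct (star x) x) := by
  rw [vnorm, ← inner_self_eq_norm_sq (𝕜 := 𝕂), inner_vE]

lemma vnorm_sq_eq_sum (x : Fin n → 𝕂) : vnorm x ^ 2 = ∑ i, ‖x i‖ ^ 2 := by
  rw [vnorm, EuclideanSpace.norm_eq, Real.sq_sqrt]
  · rfl
  · positivity

lemma norm_dot_le (x y : Fin n → 𝕂) : ‖dotProduct (star x) y‖ ≤ vnorm x * vnorm y := by
  rw [← inner_vE]; exact norm_inner_le_norm _ _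

lemma abs_re_dot_le (x y : Fin n → 𝕂) :
    |RCLike.re (dotProduct (star x) y)| ≤ vnorm x * vnorm y :=
  (RCLike.abs_re_le_norm _).trans (norm_dot_le x y)

lemma finner_self_eq_sum (A : Matrix (Fin n) (Fin k) 𝕂) :
    finner A A = ∑ i, ∑ j, ‖A i j‖ ^ 2 := by
  have h : finner A A = ‖mE A‖ ^ 2 := by
    rw [← fnorm_eq_norm, fnorm, Real.sq_sqrt (finner_self_nonneg A)]
  rw [h, EuclideanSpace.norm_eq, Real.sq_sqrt (by positivity), Fintype.sum_prod_type]
  rfl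

lemma vnorm_star (x : Fin n → 𝕂) : vnorm (star x) = vnorm x := by
  have h1 := vnorm_sq_eq_sum (star x)
  have h2 := vnorm_sq_eq_sum x
  have : vnorm (star x) ^ 2 = vnorm x ^ 2 := by
    rw [h1, h2]; simp [Pi.star_apply, norm_star]
  nlinarith [vnorm_nonneg (star x), vnorm_nonneg x]

lemma sq_le_imp {a b : ℝ} (ha : 0 ≤ a) (hb : 0 ≤ b) (h : a ^ 2 ≤ b ^ 2) : a ≤ b := by
  nlinarith

lemma mulVec_vnorm_le (M : Matrix (Fin n) (Fin k) 𝕂) (x : Fin k → 𝕂) :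
    vnorm (M *ᵥ x) ≤ fnorm M * vnorm x := by
  have key : vnorm (M *ᵥ x) ^ 2 ≤ finner M M * vnorm x ^ 2 := by
    rw [vnorm_sq_eq_sum, finner_self_eq_sum, Finset.sum_mul]
    apply Finset.sum_le_sum
    intro i _
    have h1 : (M *ᵥ x) i = dotProduct (star (star (M i))) x := by
      simp [Matrix.mulVec, dotProduct]
    have h2 : ‖(M *ᵥ x) i‖ ≤ vnorm (star (M i)) * vnorm x := by
      rw [h1]; exact norm_dot_le _ _
    have h3 : vnorm (star (M i)) ^ 2 = ∑ j, ‖M i j‖ ^ 2 := by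
      rw [vnorm_star, vnorm_sq_eq_sum]
    calc ‖(M *ᵥ x) i‖ ^ 2 ≤ (vnorm (star (M i)) * vnorm x) ^ 2 := by
          apply pow_le_pow_left₀ (norm_nonneg _) h2
      _ = (∑ j, ‖M i j‖ ^ 2) * vnorm x ^ 2 := by rw [mul_pow, h3]
  apply sq_le_imp (vnorm_nonneg _) (mul_nonneg (fnorm_nonneg _) (vnorm_nonneg _))
  calc vnorm (M *ᵥ x) ^ 2 ≤ finner M M * vnorm x ^ 2 := key
    _ = (fnorm M * vnorm x) ^ 2 := by rw [mul_pow, sq_fnorm]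

lemma finner_mul_self_eq (M : Matrix (Fin n) (Fin k) 𝕂) (N : Matrix (Fin k) (Fin m) 𝕂) :
    finner (M * N) (M * N) = ∑ j, vnorm (M *ᵥ fun l => N l j) ^ 2 := by
  rw [finner_self_eq_sum, Finset.sum_comm]
  apply Finset.sum_congr rfl
  intro j _
  rw [vnorm_sq_eq_sum]
  apply Finset.sum_congr rfl
  intro i _
  simp [Matrix.mul_apply, Matrix.mulVec, dotProduct]

lemma fnorm_mul_le (M : Matrix (Fin n) (Fin k) 𝕂) (N : Matrix (Fin k) (Fin m) 𝕂) :
    fnorm (M * N) ≤ fnorm M * fnorm N := by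
  apply sq_le_imp (fnorm_nonneg _) (mul_nonneg (fnorm_nonneg _) (fnorm_nonneg _))
  rw [sq_fnorm, finner_mul_self_eq, mul_pow, sq_fnorm, sq_fnorm,
    finner_self_eq_sum N, Finset.sum_comm, Finset.mul_sum]
  apply Finset.sum_le_sum
  intro j _
  have := mulVec_vnorm_le M (fun l => N l j)
  calc vnorm (M *ᵥ fun l => N l j) ^ 2 ≤ (fnorm M * vnorm fun l => N l j) ^ 2 :=
        pow_le_pow_left₀ (vnorm_nonneg _) this 2
    _ = finner M M * ∑ i, ‖N i j‖ ^ 2 := by rw [mul_pow, vnorm_sq_eq_sum, sq_fnorm]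


lemma vE_coe (y : EuclideanSpace 𝕂 (Fin n)) : vE (⇑y) = y := rfl

lemma quadform_eq_sum {A : Matrix (Fin n) (Fin n) 𝕂} (hA : A.IsHermitian) (x : Fin n → 𝕂) :
    RCLike.re (dotProduct (star x) (A *ᵥ x)) =
      ∑ i, hA.eigenvalues i * ‖hA.eigenvectorBasis.repr (vE x) i‖ ^ 2 := by
  classical
  set b := hA.eigenvectorBasis with hb
  set y : EuclideanSpace 𝕂 (Fin n) := vE x with hy
  have hTy : vE (A *ᵥ x) = Matrix.toEuclideanLin A y := by
    rw [Matrix.toEuclideanLin_apply]; rfl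
  have hdot : dotProduct (star x) (A *ᵥ x) = (inner 𝕂 y (Matrix.toEuclideanLin A y)) := by
    rw [← hTy, inner_vE]
  have hbasis : ∀ i, Matrix.toEuclideanLin A (b i) = (hA.eigenvalues i : 𝕂) • b i := by
    intro i
    have h1 := hA.mulVec_eigenvectorBasis i
    have : vE (A *ᵥ ⇑(b i)) = vE ((hA.eigenvalues i : ℝ) • ⇑(b i)) := by rw [h1]
    rw [Matrix.toEuclideanLin_apply]
    calc (WithLp.equiv 2 _).symm (A *ᵥ (WithLp.equiv 2 _) (b i))
        = vE (A *ᵥ ⇑(b i)) := rfl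
      _ = vE ((hA.eigenvalues i : ℝ) • ⇑(b i)) := this
      _ = (hA.eigenvalues i : 𝕂) • b i := by
          apply PiLp.ext; intro j
          show (hA.eigenvalues i : ℝ) • ((b i : EuclideanSpace 𝕂 (Fin n)) j)
            = ((hA.eigenvalues i : 𝕂) • b i) j
          rw [PiLp.smul_apply, smul_eq_mul, RCLike.real_smul_eq_coe_mul]
  have hTsum : Matrix.toEuclideanLin A y = ∑ i, (b.repr y i * (hA.eigenvalues i : 𝕂)) • b i := by
    conv_lhs => rw [← b.sum_repr y]
    rw [map_sum]
    apply Finset.sum_congr rfl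
    intro i _
    rw [_root_.map_smul, hbasis i, smul_smul]
  have hrepr : ∀ i, (inner 𝕂 y (b i)) = (starRingEnd 𝕂) (b.repr y i) := by
    intro i
    rw [b.repr_apply_apply]
    exact (inner_conj_symm _ _).symm
  have hexp : (inner 𝕂 y (Matrix.toEuclideanLin A y)) =
      ∑ i, (hA.eigenvalues i : 𝕂) * (b.repr y i * (starRingEnd 𝕂) (b.repr y i)) := by
    rw [hTsum, inner_sum]
    apply Finset.sum_congr rfl
    intro i _
    rw [inner_smul_right, hrepr i]
    ring
  rw [hdot, hexp, map_sum]
  apply Finset.sum_congr rfl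
  intro i _
  rw [RCLike.mul_conj, ← RCLike.ofReal_pow, ← RCLike.ofReal_mul, RCLike.ofReal_re]

lemma repr_norm_sum {A : Matrix (Fin n) (Fin n) 𝕂} (hA : A.IsHermitian) (x : Fin n → 𝕂) :
    ∑ i, ‖hA.eigenvectorBasis.repr (vE x) i‖ ^ 2 = vnorm x ^ 2 := by
  have h1 : vnorm x = ‖hA.eigenvectorBasis.repr (vE x)‖ := by
    rw [vnorm, (hA.eigenvectorBasis.repr.norm_map (vE x)).symm]
  rw [h1, EuclideanSpace.norm_eq, Real.sq_sqrt (by positivity)]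

lemma re_quadform_le {A : Matrix (Fin n) (Fin n) 𝕂} (hA : A.IsHermitian) {c : ℝ}
    (hc : ∀ i, hA.eigenvalues i ≤ c) (x : Fin n → 𝕂) :
    RCLike.re (dotProduct (star x) (A *ᵥ x)) ≤ c * vnorm x ^ 2 := by
  rw [quadform_eq_sum hA x, ← repr_norm_sum hA x, Finset.mul_sum]
  exact Finset.sum_le_sum fun i _ => mul_le_mul_of_nonneg_right (hc i) (by positivity)

lemma dot_mulVec_self (Y : Matrix (Fin n) (Fin k) 𝕂) (x y : Fin k → 𝕂) :
    dotProduct (star (Y *ᵥ x)) (Y *ᵥ y) =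
      dotProduct (star x) ((Yᴴ * Y) *ᵥ y) := by
  rw [Matrix.star_mulVec, Matrix.dotProduct_mulVec, Matrix.dotProduct_mulVec,
    Matrix.vecMul_vecMul]

lemma opNorm_nonneg (hn : 0 < n) (C : Matrix (Fin n) (Fin n) 𝕂) : 0 ≤ opNorm C := by
  haveI : Nonempty (Fin n) := ⟨⟨0, hn⟩⟩
  rw [opNorm]
  exact le_trans (Real.sqrt_nonneg _)
    (le_ciSup (f := fun i => Real.sqrt ((Matrix.isHermitian_conjTranspose_mul_self C).eigenvalues i))
      (Set.Finite.bddAbove (Set.finite_range _)) (Classical.arbitrary (Fin n)))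

lemma opNorm_mulVec (hn : 0 < n) (C : Matrix (Fin n) (Fin n) 𝕂) (x : Fin n → 𝕂) :
    vnorm (C *ᵥ x) ≤ opNorm C * vnorm x := by
  haveI : Nonempty (Fin n) := ⟨⟨0, hn⟩⟩
  set h := Matrix.isHermitian_conjTranspose_mul_self C
  have hev : ∀ i, h.eigenvalues i ≤ opNorm C ^ 2 := by
    intro i
    have h1 : Real.sqrt (h.eigenvalues i) ≤ opNorm C := by
      rw [opNorm]
      exact le_ciSup
        (f := fun i => Real.sqrt ((Matrix.isHermitian_conjTranspose_mul_self C).eigenvalues i))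
        (Set.Finite.bddAbove (Set.finite_range _)) i
    have h2 : 0 ≤ h.eigenvalues i := Matrix.eigenvalues_conjTranspose_mul_self_nonneg C i
    calc h.eigenvalues i = Real.sqrt (h.eigenvalues i) ^ 2 := (Real.sq_sqrt h2).symm
      _ ≤ opNorm C ^ 2 := pow_le_pow_left₀ (Real.sqrt_nonneg _) h1 2
  apply sq_le_imp (vnorm_nonneg _) (mul_nonneg (opNorm_nonneg hn C) (vnorm_nonneg _))
  calc vnorm (C *ᵥ x) ^ 2 = RCLike.re (dotProduct (star (C *ᵥ x)) (C *ᵥ x)) := vnorm_sq _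
    _ = RCLike.re (dotProduct (star x) ((Cᴴ * C) *ᵥ x)) := by rw [dot_mulVec_self]
    _ ≤ opNorm C ^ 2 * vnorm x ^ 2 := re_quadform_le h hev x
    _ = (opNorm C * vnorm x) ^ 2 := by ring

lemma exists_sigma_vec (hk : 0 < k) (Y : Matrix (Fin n) (Fin k) 𝕂) :
    ∃ z : Fin k → 𝕂, vnorm z = 1 ∧
      vnorm (Y *ᵥ z) ^ 2 = ⨅ i, (Matrix.isHermitian_conjTranspose_mul_self Y).eigenvalues i := by
  haveI : Nonempty (Fin k) := ⟨⟨0, hk⟩⟩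
  set h := Matrix.isHermitian_conjTranspose_mul_self Y
  obtain ⟨i₀, hi₀⟩ := exists_eq_ciInf_of_finite (f := fun i => h.eigenvalues i)
  refine ⟨⇑(h.eigenvectorBasis i₀), ?_, ?_⟩
  · have : vE ⇑(h.eigenvectorBasis i₀) = h.eigenvectorBasis i₀ := rfl
    rw [vnorm, this]
    exact h.eigenvectorBasis.orthonormal.1 i₀
  · have hev := h.mulVec_eigenvectorBasis i₀
    rw [vnorm_sq, dot_mulVec_self, hev]
    have : dotProduct (star ⇑(h.eigenvectorBasis i₀))
        (h.eigenvalues i₀ • ⇑(h.eigenvectorBasis i₀)) =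
        (h.eigenvalues i₀ : 𝕂) * dotProduct (star ⇑(h.eigenvectorBasis i₀))
          ⇑(h.eigenvectorBasis i₀) := by
      simp only [dotProduct, Pi.smul_apply, smul_eq_mul, Finset.mul_sum,
        RCLike.real_smul_eq_coe_mul]
      apply Finset.sum_congr rfl
      intro j _
      ring
    rw [this]
    have hz : RCLike.re (dotProduct (star ⇑(h.eigenvectorBasis i₀))
        ⇑(h.eigenvectorBasis i₀)) = 1 := by
      rw [← vnorm_sq]
      have : vE ⇑(h.eigenvectorBasis i₀) = h.eigenvectorBasis i₀ := rfl
      rw [vnorm, this, h.eigenvectorBasis.orthonormal.1 i₀]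
      norm_num
    have him : RCLike.im (dotProduct (star ⇑(h.eigenvectorBasis i₀))
        ⇑(h.eigenvectorBasis i₀)) = 0 := by
      have : (dotProduct (star ⇑(h.eigenvectorBasis i₀)) ⇑(h.eigenvectorBasis i₀) : 𝕂)
          = inner 𝕂 (h.eigenvectorBasis i₀) (h.eigenvectorBasis i₀) := (inner_vE _ _).symm
      rw [this, ← inner_self_ofReal_re]
      simp
    rw [RCLike.mul_re, him, hz]
    simp [← hi₀]

lemma conjT_eq_transpose (M : Matrix (Fin m) (Fin m) ℝ) : Mᴴ = Mᵀ := by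
  ext i j; simp [Matrix.conjTranspose_apply]

lemma real_inner_euc (x y : EuclideanSpace ℝ (Fin m)) :
    (inner ℝ x y) = dotProduct (x : Fin m → ℝ) y := by
  rw [PiLp.inner_apply]
  simp [RCLike.inner_apply, dotProduct]
  exact Finset.sum_congr rfl fun _ _ => mul_comm _ _

lemma exists_moorePenrose {G : Matrix (Fin m) (Fin m) ℝ} (hG : G.IsHermitian) :
    ∃ H, IsMoorePenrose G H := by
  classical
  set U : Matrix (Fin m) (Fin m) ℝ := (hG.eigenvectorUnitary : Matrix (Fin m) (Fin m) ℝ) with hU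
  have hU1 : star U * U = 1 := (Unitary.mem_iff.mp hG.eigenvectorUnitary.2).1
  set d : Fin m → ℝ := hG.eigenvalues
  have hspec : G = U * Matrix.diagonal d * star U := by
    have h := hG.spectral_theorem
    rwa [show (RCLike.ofReal ∘ hG.eigenvalues : Fin m → ℝ) = hG.eigenvalues from
      funext fun i => rfl] at h
  set H : Matrix (Fin m) (Fin m) ℝ := U * Matrix.diagonal (fun i => (d i)⁻¹) * star U with hH
  have key : ∀ e f : Fin m → ℝ,
      (U * Matrix.diagonal e * star U) * (U * Matrix.diagonal f * star U) =
        U * Matrix.diagonal (fun i => e i * f i) * star U := by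
    intro e f
    calc (U * Matrix.diagonal e * star U) * (U * Matrix.diagonal f * star U)
        = U * Matrix.diagonal e * (star U * U) * Matrix.diagonal f * star U := by
          simp only [Matrix.mul_assoc]
      _ = U * Matrix.diagonal (fun i => e i * f i) * star U := by
          rw [hU1, Matrix.mul_one]
          simp only [Matrix.mul_assoc, Matrix.diagonal_mul_diagonal]
  have hsymm : ∀ e : Fin m → ℝ, (U * Matrix.diagonal e * star U)ᵀ =
      U * Matrix.diagonal e * star U := by
    intro e
    have hds : (Matrix.diagonal e)ᴴ = Matrix.diagonal e := by
      rw [Matrix.diagonal_conjTranspose]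
      simp
    rw [← conjT_eq_transpose, Matrix.conjTranspose_mul, Matrix.conjTranspose_mul, hds,
      Matrix.star_eq_conjTranspose, Matrix.conjTranspose_conjTranspose, Matrix.mul_assoc]
  have hd1 : (fun i => d i * (d i)⁻¹ * d i) = d := by
    funext i
    rcases eq_or_ne (d i) 0 with h | h
    · rw [h]; simp
    · field_simp
  have hd2 : (fun i => (d i)⁻¹ * d i * (d i)⁻¹) = fun i => (d i)⁻¹ := by
    funext i
    rcases eq_or_ne (d i) 0 with h | h
    · rw [h]; simp
    · field_simp
  refine ⟨H, ?_, ?_, ?_, ?_⟩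
  · rw [hspec, hH, key, key, hd1]
  · rw [hspec, hH, key, key, hd2]
  · rw [hspec, hH, key]; exact hsymm _
  · rw [hspec, hH, key]; exact hsymm _

lemma pinv_isMoorePenrose {G : Matrix (Fin m) (Fin m) ℝ} (hG : G.IsHermitian) :
    IsMoorePenrose G (pinv G) := by
  rw [pinv, dif_pos (exists_moorePenrose hG)]
  exact (exists_moorePenrose hG).choose_spec

lemma exists_mulVec_eq {G : Matrix (Fin m) (Fin m) ℝ} (hG : G.IsHermitian)
    (c : Fin m → ℝ) (hc : ∀ w, G *ᵥ w = 0 → dotProduct c w = 0) :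
    ∃ u, G *ᵥ u = c := by
  classical
  set T : EuclideanSpace ℝ (Fin m) →ₗ[ℝ] EuclideanSpace ℝ (Fin m) := Matrix.toEuclideanLin G
    with hT
  have hTapp : ∀ x : EuclideanSpace ℝ (Fin m), (T x : Fin m → ℝ) = G *ᵥ (x : Fin m → ℝ) := by
    intro x; rfl
  have hGsym : Gᵀ = G := by rw [← conjT_eq_transpose]; exact hG
  have hsym : ∀ u w : EuclideanSpace ℝ (Fin m), (inner ℝ (T u) w) = (inner ℝ u (T w)) := by
    intro u w
    rw [real_inner_euc, real_inner_euc, hTapp, hTapp, Matrix.dotProduct_mulVec,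
      ← Matrix.mulVec_transpose, hGsym, dotProduct_comm]
  have hle : LinearMap.range T ≤ (LinearMap.ker T)ᗮ := by
    rintro _ ⟨u, rfl⟩
    rw [Submodule.mem_orthogonal]
    intro w hw
    have hw0 : T w = 0 := hw
    rw [← hsym w u, hw0, inner_zero_left]
  have hdim : Module.finrank ℝ (LinearMap.range T) =
      Module.finrank ℝ ((LinearMap.ker T)ᗮ : Submodule ℝ (EuclideanSpace ℝ (Fin m))) := by
    have h1 := LinearMap.finrank_range_add_finrank_ker T
    have h2 := Submodule.finrank_add_finrank_orthogonal (K := LinearMap.ker T)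
    omega
  have heq : LinearMap.range T = (LinearMap.ker T)ᗮ :=
    Submodule.eq_of_le_of_finrank_eq hle hdim
  have hcmem : ((WithLp.equiv 2 _).symm c : EuclideanSpace ℝ (Fin m)) ∈ (LinearMap.ker T)ᗮ := by
    rw [Submodule.mem_orthogonal]
    intro w hw
    have hw0 : T w = 0 := hw
    have hw' : G *ᵥ (w : Fin m → ℝ) = 0 := by
      have h := congrArg (fun z : EuclideanSpace ℝ (Fin m) => (z : Fin m → ℝ)) hw0
      rw [hTapp] at h
      exact h
    rw [real_inner_euc, dotProduct_comm]
    exact hc _ hw'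
  rw [← heq] at hcmem
  obtain ⟨u, hu⟩ := hcmem
  refine ⟨(u : Fin m → ℝ), ?_⟩
  have h := congrArg (fun z : EuclideanSpace ℝ (Fin m) => (z : Fin m → ℝ)) hu
  rw [hTapp] at h
  exact h

lemma mulVec_pinv_solve {G : Matrix (Fin m) (Fin m) ℝ} (hG : G.IsHermitian)
    {c : Fin m → ℝ} (h : ∃ u, G *ᵥ u = c) : G *ᵥ (pinv G *ᵥ c) = c := by
  obtain ⟨u, rfl⟩ := h
  have h1 := (pinv_isMoorePenrose hG).1
  rw [Matrix.mulVec_mulVec, Matrix.mulVec_mulVec, h1]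


lemma re_trace_eq_sum (M : Matrix (Fin n) (Fin n) 𝕂) :
    RCLike.re (Matrix.trace M) = ∑ i, RCLike.re (M i i) := by
  rw [Matrix.trace, map_sum]; rfl

lemma finner_nonneg_of_quadform {P X : Matrix (Fin n) (Fin n) 𝕂}
    (hPh : P.IsHermitian)
    (hP : ∀ x : Fin n → 𝕂, 0 ≤ RCLike.re (dotProduct (star x) (P *ᵥ x)))
    (hX : X.PosSemidef) : 0 ≤ finner P X := by
  obtain ⟨B, rfl⟩ : ∃ B : Matrix (Fin n) (Fin n) 𝕂, X = Bᴴ * B := by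
    open MatrixOrder in exact CStarAlgebra.nonneg_iff_eq_star_mul_self.mp hX.nonneg
  rw [finner, hPh, ← Matrix.mul_assoc, Matrix.trace_mul_comm, re_trace_eq_sum]
  apply Finset.sum_nonneg
  intro i _
  have key : (B * (P * Bᴴ)) i i =
      dotProduct (star (star (B i))) (P *ᵥ star (B i)) := by
    simp only [Matrix.mul_apply, Matrix.mulVec, dotProduct, Matrix.conjTranspose_apply,
      star_star, Pi.star_apply, Finset.mul_sum]
  rw [key]
  exact hP _

lemma finner_vecMulVec (a c : Fin n → 𝕂) (b d : Fin k → 𝕂) :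
    finner (Matrix.vecMulVec a (star b)) (Matrix.vecMulVec c (star d)) =
      RCLike.re ((dotProduct (star a) c) * (starRingEnd 𝕂) (dotProduct (star b) d))
    := by
  rw [finner, Matrix.trace]
  congr 1
  simp only [Matrix.diag, Matrix.mul_apply, Matrix.conjTranspose_apply, Matrix.vecMulVec_apply,
    dotProduct, Pi.star_apply, map_sum, map_mul]
  rw [Finset.sum_comm, Finset.sum_mul_sum]
  apply Finset.sum_congr rfl
  intro i _
  apply Finset.sum_congr rfl
  intro j _
  simp only [star_mul', star_star, RingHomCompTriple.comp_apply, map_mul, starRingEnd_apply]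
  ring

lemma finner_mat_vecMulVec (D : Matrix (Fin n) (Fin k) 𝕂) (p : Fin n → 𝕂) (z : Fin k → 𝕂) :
    finner D (Matrix.vecMulVec p (star z)) =
      RCLike.re (dotProduct (star (D *ᵥ z)) p) := by
  rw [finner, Matrix.trace]
  congr 1
  simp only [Matrix.diag, Matrix.mul_apply, Matrix.conjTranspose_apply, Matrix.vecMulVec_apply,
    dotProduct, Matrix.mulVec, Pi.star_apply, star_sum, star_mul', star_star,
    Finset.sum_mul, Finset.mul_sum]
  rw [Finset.sum_comm]
  apply Finset.sum_congr rfl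
  intro i _
  apply Finset.sum_congr rfl
  intro j _
  ring

lemma mul_vecMulVec (M : Matrix (Fin n) (Fin n) 𝕂) (a : Fin n → 𝕂) (b : Fin k → 𝕂) :
    M * Matrix.vecMulVec a b = Matrix.vecMulVec (M *ᵥ a) b := by
  ext i j
  simp only [Matrix.mul_apply, Matrix.vecMulVec_apply, Matrix.mulVec, dotProduct,
    Finset.sum_mul]
  apply Finset.sum_congr rfl
  intro l _
  ring

lemma vecMulVec_mul (a : Fin n → 𝕂) (b : Fin k → 𝕂) (N : Matrix (Fin k) (Fin m) 𝕂) :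
    Matrix.vecMulVec a b * N = Matrix.vecMulVec a (b ᵥ* N) := by
  ext i j
  simp only [Matrix.mul_apply, Matrix.vecMulVec_apply, Matrix.vecMul, dotProduct,
    Finset.mul_sum]
  apply Finset.sum_congr rfl
  intro l _
  ring

lemma finner_mul_left (M : Matrix (Fin n) (Fin n) 𝕂) (N P : Matrix (Fin n) (Fin k) 𝕂) :
    finner (M * N) P = finner N (Mᴴ * P) := by
  rw [finner, finner, Matrix.conjTranspose_mul, Matrix.mul_assoc]

lemma finner_CY_Y (C : Matrix (Fin n) (Fin n) 𝕂) (Y : Matrix (Fin n) (Fin k) 𝕂) :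
    finner (C * Y) Y = finner C (Y * Yᴴ) := by
  rw [finner, finner, Matrix.conjTranspose_mul, Matrix.mul_assoc, ← Matrix.mul_assoc,
    Matrix.trace_mul_cycle, Matrix.trace_mul_comm]


lemma vE_sub {n : ℕ} (x y : Fin n → 𝕂) : vE (x - y) = vE x - vE y := rfl

lemma vnorm_sub_le {n : ℕ} (x y : Fin n → 𝕂) : vnorm (x - y) ≤ vnorm x + vnorm y := by
  rw [vnorm, vE_sub]; exact norm_sub_le _ _

lemma fnorm_sub_le {n k : ℕ} (X Y : Matrix (Fin n) (Fin k) 𝕂) :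
    fnorm (X - Y) ≤ fnorm X + fnorm Y := by
  rw [fnorm_eq_norm, fnorm_eq_norm, fnorm_eq_norm, mE_sub]; exact norm_sub_le _ _

lemma finner_self_eq_cols {n k : ℕ} (N : Matrix (Fin n) (Fin k) 𝕂) :
    finner N N = ∑ j, vnorm (fun l => N l j) ^ 2 := by
  have h := finner_mul_self_eq (1 : Matrix (Fin n) (Fin n) 𝕂) N
  simpa [Matrix.one_mul, Matrix.one_mulVec] using h

lemma fnorm_mul_le_op {n k : ℕ} (hn : 0 < n) (C : Matrix (Fin n) (Fin n) 𝕂)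
    (N : Matrix (Fin n) (Fin k) 𝕂) : fnorm (C * N) ≤ opNorm C * fnorm N := by
  apply sq_le_imp (fnorm_nonneg _) (mul_nonneg (opNorm_nonneg hn C) (fnorm_nonneg _))
  rw [sq_fnorm, finner_mul_self_eq, mul_pow, sq_fnorm, finner_self_eq_cols N, Finset.mul_sum]
  apply Finset.sum_le_sum
  intro j _
  have h := opNorm_mulVec hn C (fun l => N l j)
  calc vnorm (C *ᵥ fun l => N l j) ^ 2 ≤ (opNorm C * vnorm fun l => N l j) ^ 2 :=
        pow_le_pow_left₀ (vnorm_nonneg _) h 2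
    _ = opNorm C ^ 2 * vnorm (fun l => N l j) ^ 2 := by ring

lemma finner_sum_right {n k m' : ℕ} (B : Matrix (Fin n) (Fin k) 𝕂)
    (A : Fin m' → Matrix (Fin n) (Fin k) 𝕂) (μ : Fin m' → ℝ) :
    finner B (∑ i, (μ i : 𝕂) • A i) = ∑ i, μ i * finner B (A i) := by
  rw [finner_comm, finner_sum_left]
  exact Finset.sum_congr rfl fun i _ => by rw [finner_comm]

lemma dot_self_eq {n : ℕ} (x : Fin n → 𝕂) :
    dotProduct (star x) x = ((vnorm x ^ 2 : ℝ) : 𝕂) := by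
  rw [← inner_vE, inner_self_eq_norm_sq_to_K, vnorm]
  norm_cast

lemma vnorm_zero_imp {n : ℕ} (x : Fin n → 𝕂) (h : vnorm x = 0) : x = 0 := by
  have h2 : vE x = 0 := norm_eq_zero.mp h
  funext p
  exact congrFun (congrArg (WithLp.equiv 2 _) h2) p

lemma finner_one_left {n : ℕ} (X : Matrix (Fin n) (Fin n) 𝕂) :
    finner 1 X = RCLike.re X.trace := by
  rw [finner, Matrix.conjTranspose_one, Matrix.one_mul]

lemma calAstar_isHermitian {n m' : ℕ} (A : Fin m' → Matrix (Fin n) (Fin n) 𝕂)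
    (hA : ∀ i, (A i).IsHermitian) (μ : Fin m' → ℝ) : (calAstar A μ).IsHermitian := by
  rw [calAstar, Matrix.IsHermitian, Matrix.conjTranspose_sum]
  apply Finset.sum_congr rfl
  intro i _
  rw [Matrix.conjTranspose_smul, RCLike.star_def, RCLike.conj_ofReal, hA i]

lemma calAstar_mul {n k m' : ℕ} (A : Fin m' → Matrix (Fin n) (Fin n) 𝕂) (μ : Fin m' → ℝ)
    (Y : Matrix (Fin n) (Fin k) 𝕂) :
    calAstar A μ * Y = ∑ i, (μ i : 𝕂) • (A i * Y) := by
  rw [calAstar, Matrix.sum_mul]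
  exact Finset.sum_congr rfl fun i _ => Matrix.smul_mul _ _ _

lemma gram_isHermitian {n k m' : ℕ} (A : Fin m' → Matrix (Fin n) (Fin n) 𝕂)
    (Y : Matrix (Fin n) (Fin k) 𝕂) : (gram A Y).IsHermitian := by
  rw [Matrix.IsHermitian]
  ext i j
  simp only [Matrix.conjTranspose_apply, gram, Matrix.of_apply, star_trivial]
  exact finner_comm _ _

lemma finner_mulY {n k : ℕ} (M : Matrix (Fin n) (Fin n) 𝕂) (Y W : Matrix (Fin n) (Fin k) 𝕂) :
    finner (M * Y) W = finner M (W * Yᴴ) := by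
  rw [finner, finner, Matrix.conjTranspose_mul]
  congr 1
  calc Matrix.trace (Yᴴ * Mᴴ * W) = Matrix.trace (W * Yᴴ * Mᴴ) :=
        Matrix.trace_mul_cycle Yᴴ Mᴴ W
    _ = Matrix.trace (Mᴴ * (W * Yᴴ)) := by rw [Matrix.trace_mul_comm]

lemma fnorm_one_pos {n : ℕ} (hn : 0 < n) : 0 < fnorm (1 : Matrix (Fin n) (Fin n) 𝕂) := by
  have h : finner (1 : Matrix (Fin n) (Fin n) 𝕂) 1 = n := by
    rw [finner_one_left, Matrix.trace_one]
    simp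
  rw [fnorm, h]
  positivity

lemma fnorm_psd_le_trace {n : ℕ} {X : Matrix (Fin n) (Fin n) 𝕂} (hX : X.PosSemidef) :
    fnorm X ≤ RCLike.re X.trace := by
  obtain ⟨B, rfl⟩ : ∃ B : Matrix (Fin n) (Fin n) 𝕂, X = Bᴴ * B := by
    open MatrixOrder in exact CStarAlgebra.nonneg_iff_eq_star_mul_self.mp hX.nonneg
  calc fnorm (Bᴴ * B) ≤ fnorm Bᴴ * fnorm B := fnorm_mul_le _ _
    _ = fnorm B * fnorm B := by rw [fnorm_conjTranspose]
    _ = finner B B := by rw [← sq_fnorm]; ring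
    _ = RCLike.re (Bᴴ * B).trace := rfl


lemma finner_zero_left {n k : ℕ} (B : Matrix (Fin n) (Fin k) 𝕂) : finner 0 B = 0 := by
  rw [finner]
  simp

/-- deterministic optimality gap at any `(εg, εH)`-SOSP. -/
theorem deterministic_optimality_gap
    {𝕂 : Type*} [RCLike 𝕂] {n m k : ℕ} (hn : 0 < n) (hm : 0 < m) (hk : 0 < k)
    (A : Fin m → Matrix (Fin n) (Fin n) 𝕂) (hA : ∀ i, (A i).IsHermitian)
    (b : Fin m → ℝ)
    (hCne : (SDPSet A b).Nonempty) (hCcpt : IsCompact (SDPSet A b))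
    (R K : ℝ)
    (hR : ∀ X ∈ SDPSet A b, RCLike.re (Matrix.trace X) ≤ R)
    (hK : ∀ Y ∈ FactSet A b k, ∀ Z : Matrix (Fin n) (Fin n) 𝕂,
      fnorm (calAstar A (pinv (gram A Y) *ᵥ calA A Z)) ≤ K * fnorm Z)
    (C : Matrix (Fin n) (Fin n) 𝕂) (hC : C.IsHermitian)
    (εg εH : ℝ) (hεg : 0 ≤ εg) (hεH : 0 ≤ εH)
    (Y : Matrix (Fin n) (Fin k) 𝕂) (hY : IsSOSP A b C Y εg εH) :
    0 ≤ finner (C * Y) Y - sInf ((fun X => finner C X) '' SDPSet A b) ∧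
    finner (C * Y) Y - sInf ((fun X => finner C X) '' SDPSet A b) ≤
      (εH + K * (2 + K * R) ^ 2 * opNorm C * sigmaLast Y ^ 2) * R +
        εg / 2 * Real.sqrt R := by
  classical
  set σ : ℝ := sigmaLast Y with hσdef
  set lam : Fin m → ℝ := pinv (gram A Y) *ᵥ calA A (C * (Y * Yᴴ)) with hlam
  set Mlam : Matrix (Fin n) (Fin n) 𝕂 := calAstar A lam with hMlamdef
  set S : Matrix (Fin n) (Fin n) 𝕂 := Smat A C Y with hSdef
  have hSsub : S = C - Mlam := rfl
  have hYmem : Y ∈ FactSet A b k := hY.1.1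
  have hSH : S.IsHermitian := by
    rw [hSsub]; exact hC.sub (calAstar_isHermitian A hA lam)
  have hYY : (Y * Yᴴ) ∈ SDPSet A b :=
    ⟨Matrix.posSemidef_self_mul_conjTranspose Y, fun i => hYmem i⟩
  have htrYY : RCLike.re (Y * Yᴴ).trace = finner Y Y := by
    rw [finner, Matrix.trace_mul_comm]
  have hYR : finner Y Y ≤ R := by rw [← htrYY]; exact hR _ hYY
  have hRnn : (0:ℝ) ≤ R := le_trans (finner_self_nonneg Y) hYR
  have hfY : fnorm Y ≤ Real.sqrt R := by
    rw [fnorm]; exact Real.sqrt_le_sqrt hYR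
  have hKnn : (0:ℝ) ≤ K := by
    have h1 := hK Y hYmem 1
    have h2 : (0:ℝ) ≤ K * fnorm (1 : Matrix (Fin n) (Fin n) 𝕂) :=
      le_trans (fnorm_nonneg _) h1
    nlinarith [fnorm_one_pos (𝕂 := 𝕂) hn]
  have hopC := opNorm_nonneg hn C
  have hσnn : 0 ≤ σ := Real.sqrt_nonneg _
  set B : ℝ := opNorm C + K * (opNorm C * R) with hBdef
  have hBnn : 0 ≤ B := by
    rw [hBdef]
    have := mul_nonneg hKnn (mul_nonneg hopC hRnn)
    linarith
  have hMlamF : fnorm Mlam ≤ K * (opNorm C * R) := by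
    have h1 : fnorm Mlam ≤ K * fnorm (C * (Y * Yᴴ)) := hK Y hYmem (C * (Y * Yᴴ))
    have h2 : fnorm (C * (Y * Yᴴ)) ≤ opNorm C * R := by
      have h3 : fnorm (Y * Yᴴ) ≤ R := le_trans (fnorm_psd_le_trace hYY.1) (hR _ hYY)
      calc fnorm (C * (Y * Yᴴ)) ≤ opNorm C * fnorm (Y * Yᴴ) := fnorm_mul_le_op hn C _
        _ ≤ opNorm C * R := mul_le_mul_of_nonneg_left h3 hopC
    calc fnorm Mlam ≤ K * fnorm (C * (Y * Yᴴ)) := h1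
      _ ≤ K * (opNorm C * R) := mul_le_mul_of_nonneg_left h2 hKnn
  have hSv : ∀ v : Fin n → 𝕂, vnorm (S *ᵥ v) ≤ B * vnorm v := by
    intro v
    have h1 : S *ᵥ v = C *ᵥ v - Mlam *ᵥ v := by rw [hSsub, Matrix.sub_mulVec]
    calc vnorm (S *ᵥ v) ≤ vnorm (C *ᵥ v) + vnorm (Mlam *ᵥ v) := by
          rw [h1]; exact vnorm_sub_le _ _
      _ ≤ opNorm C * vnorm v + K * (opNorm C * R) * vnorm v := by
          refine add_le_add (opNorm_mulVec hn C v) ?_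
          exact le_trans (mulVec_vnorm_le Mlam v)
            (mul_le_mul_of_nonneg_right hMlamF (vnorm_nonneg v))
      _ = B * vnorm v := by rw [hBdef]; ring
  have hSD : ∀ D : Matrix (Fin n) (Fin k) 𝕂, fnorm (S * D) ≤ B * fnorm D := by
    intro D
    have h1 : S * D = C * D - Mlam * D := by rw [hSsub, Matrix.sub_mul]
    calc fnorm (S * D) ≤ fnorm (C * D) + fnorm (Mlam * D) := by
          rw [h1]; exact fnorm_sub_le _ _
      _ ≤ opNorm C * fnorm D + K * (opNorm C * R) * fnorm D := by
          refine add_le_add (fnorm_mul_le_op hn C D) ?_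
          exact le_trans (fnorm_mul_le Mlam D)
            (mul_le_mul_of_nonneg_right hMlamF (fnorm_nonneg D))
      _ = B * fnorm D := by rw [hBdef]; ring
  set c₀ : ℝ := εH + K * (2 + K * R) ^ 2 * opNorm C * σ ^ 2 with hc₀def
  have hc₀nn : 0 ≤ c₀ := by
    rw [hc₀def]
    have := mul_nonneg (mul_nonneg (mul_nonneg hKnn (sq_nonneg (2 + K * R))) hopC) (sq_nonneg σ)
    linarith
  have hquadUnit : ∀ v : Fin n → 𝕂, vnorm v = 1 →
      -c₀ ≤ RCLike.re (dotProduct (star v) (S *ᵥ v)) := by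
    intro v hv
    obtain ⟨z, hz1, hz2⟩ := exists_sigma_vec hk Y
    haveI : Nonempty (Fin k) := ⟨⟨0, hk⟩⟩
    have hσsq : vnorm (Y *ᵥ z) ^ 2 = σ ^ 2 := by
      rw [hz2, hσdef, sigmaLast, Real.sq_sqrt]
      exact le_ciInf fun i => Matrix.eigenvalues_conjTranspose_mul_self_nonneg Y i
    have hYz : vnorm (Y *ᵥ z) = σ := by nlinarith [vnorm_nonneg (Y *ᵥ z), hσnn]
    set W : Matrix (Fin n) (Fin k) 𝕂 := Matrix.vecMulVec v (star z) with hW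
    set Z₀ : Matrix (Fin n) (Fin n) 𝕂 := Matrix.vecMulVec v (star (Y *ᵥ z)) with hZ₀
    set cv : Fin m → ℝ := calA A Z₀ with hcv
    set μ : Fin m → ℝ := pinv (gram A Y) *ᵥ cv with hμ
    set Dm : Matrix (Fin n) (Fin k) 𝕂 := calAstar A μ * Y with hDmdef
    set V : Matrix (Fin n) (Fin k) 𝕂 := W - Dm with hV
    have hWY : W * Yᴴ = Z₀ := by
      rw [hW, hZ₀, vecMulVec_mul, ← Matrix.star_mulVec]
    have hci : ∀ i, finner (A i * Y) W = cv i := by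
      intro i; rw [finner_mulY, hWY]; rfl
    have hGH := gram_isHermitian A Y
    have hker : ∀ w, gram A Y *ᵥ w = 0 → dotProduct cv w = 0 := by
      intro w hw
      set Mw : Matrix (Fin n) (Fin k) 𝕂 := ∑ i, (w i : 𝕂) • (A i * Y) with hMw
      have hexp : ∀ i, finner (A i * Y) Mw = (gram A Y *ᵥ w) i := by
        intro i
        rw [hMw, finner_sum_right]
        have h5 : (gram A Y *ᵥ w) i = ∑ j, finner (A i * Y) (A j * Y) * w j := by
          simp [Matrix.mulVec, dotProduct, gram, Matrix.of_apply]
        rw [h5]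
        exact Finset.sum_congr rfl fun j _ => by ring
      have hMw0 : Mw = 0 := by
        apply eq_zero_of_finner_self
        nth_rewrite 1 [hMw]
        rw [finner_sum_left]
        apply Finset.sum_eq_zero
        intro i _
        rw [hexp i, hw]
        simp
      have h2 : dotProduct cv w = finner Mw W := by
        rw [hMw, finner_sum_left]
        simp only [dotProduct]
        apply Finset.sum_congr rfl
        intro i _
        rw [← hci i]
        ring
      rw [h2, hMw0, finner_zero_left]
    have hsolve : gram A Y *ᵥ μ = cv :=
      mulVec_pinv_solve hGH (exists_mulVec_eq hGH cv hker)
    have hDmsum : Dm = ∑ j, (μ j : 𝕂) • (A j * Y) := calAstar_mul A μ Y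
    have htanD : ∀ i, finner (A i * Y) Dm = cv i := by
      intro i
      rw [hDmsum, finner_sum_right, ← hsolve]
      have h5 : (gram A Y *ᵥ μ) i = ∑ j, finner (A i * Y) (A j * Y) * μ j := by
        simp [Matrix.mulVec, dotProduct, gram, Matrix.of_apply]
      rw [h5]
      exact Finset.sum_congr rfl fun j _ => by ring
    have htan : ∀ i, finner (A i * Y) V = 0 := by
      intro i; rw [hV, finner_sub_right, hci, htanD, sub_self]
    have hsosp : -εH * fnorm V ^ 2 ≤ finner V (S * V) := hY.2 V htan
    have hdotv : (dotProduct (star v) v : 𝕂) = 1 := by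
      rw [dot_self_eq, hv]; norm_num
    have hdotz : (dotProduct (star z) z : 𝕂) = 1 := by
      rw [dot_self_eq, hz1]; norm_num
    have hWW : finner W W = 1 := by
      rw [hW, finner_vecMulVec, hdotv, hdotz]; simp
    have hDV : finner Dm V = 0 := by
      rw [hDmsum, finner_sum_left]
      exact Finset.sum_eq_zero fun i _ => by rw [htan i, mul_zero]
    have hWVD : W = V + Dm := by rw [hV]; abel
    have hVV : finner V V ≤ 1 := by
      have hexpand : finner W W = finner V V + 2 * finner Dm V + finner Dm Dm := by
        rw [hWVD, finner_add_left, finner_add_right, finner_add_right, finner_comm V Dm]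
        ring
      rw [hDV] at hexpand
      nlinarith [finner_self_nonneg Dm]
    have hZ₀f : fnorm Z₀ = σ := by
      have h1 : finner Z₀ Z₀ = σ ^ 2 := by
        rw [hZ₀, finner_vecMulVec, hdotv, dot_self_eq, hσsq, one_mul, RCLike.conj_ofReal,
          RCLike.ofReal_re]
      rw [fnorm, h1, Real.sqrt_sq hσnn]
    have hMμ : fnorm (calAstar A μ) ≤ K * σ := by
      have h1 := hK Y hYmem Z₀
      rw [hZ₀f] at h1
      exact h1
    have hDf : fnorm Dm ≤ K * σ * Real.sqrt R := by
      have h0 : (0:ℝ) ≤ K * σ := mul_nonneg hKnn hσnn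
      calc fnorm Dm ≤ fnorm (calAstar A μ) * fnorm Y := fnorm_mul_le _ _
        _ ≤ (K * σ) * Real.sqrt R :=
            mul_le_mul hMμ hfY (fnorm_nonneg _) h0
    have hDz : vnorm (Dm *ᵥ z) ≤ K * σ ^ 2 := by
      have h1 : Dm *ᵥ z = calAstar A μ *ᵥ (Y *ᵥ z) := by
        rw [hDmdef, ← Matrix.mulVec_mulVec]
      rw [h1]
      calc vnorm (calAstar A μ *ᵥ (Y *ᵥ z)) ≤ fnorm (calAstar A μ) * vnorm (Y *ᵥ z) :=
            mulVec_vnorm_le _ _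
        _ ≤ K * σ * σ := by
            rw [hYz]; exact mul_le_mul_of_nonneg_right hMμ hσnn
        _ = K * σ ^ 2 := by ring
    have hSW : S * W = Matrix.vecMulVec (S *ᵥ v) (star z) := by rw [hW, mul_vecMulVec]
    have hq : finner W (S * W) = RCLike.re (dotProduct (star v) (S *ᵥ v)) := by
      rw [hSW, hW, finner_vecMulVec, hdotz]
      simp
    have hcross : finner W (S * Dm) = finner Dm (S * W) := by
      have h1 : finner (Sᴴ * W) Dm = finner W (S * Dm) := by
        rw [finner_mul_left, Matrix.conjTranspose_conjTranspose]
      rw [← h1, hSH]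
      exact finner_comm _ _
    have hdecomp : finner V (S * V) =
        finner W (S * W) - 2 * finner Dm (S * W) + finner Dm (S * Dm) := by
      rw [hV, Matrix.mul_sub, finner_sub_left, finner_sub_right, finner_sub_right, hcross]
      ring
    have hSv1 : vnorm (S *ᵥ v) ≤ B := by
      have := hSv v; rwa [hv, mul_one] at this
    have hDSW : |finner Dm (S * W)| ≤ K * σ ^ 2 * B := by
      rw [hSW, finner_mat_vecMulVec]
      have h0 : (0:ℝ) ≤ K * σ ^ 2 := mul_nonneg hKnn (sq_nonneg σ)
      calc |RCLike.re (dotProduct (star (Dm *ᵥ z)) (S *ᵥ v))|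
          ≤ vnorm (Dm *ᵥ z) * vnorm (S *ᵥ v) := abs_re_dot_le _ _
        _ ≤ (K * σ ^ 2) * B := mul_le_mul hDz hSv1 (vnorm_nonneg _) h0
    have hDSD : |finner Dm (S * Dm)| ≤
        (K * σ * Real.sqrt R) * (B * (K * σ * Real.sqrt R)) := by
      have h0 : (0:ℝ) ≤ K * σ * Real.sqrt R :=
        mul_nonneg (mul_nonneg hKnn hσnn) (Real.sqrt_nonneg _)
      calc |finner Dm (S * Dm)| ≤ fnorm Dm * fnorm (S * Dm) := abs_finner_le _ _
        _ ≤ (K * σ * Real.sqrt R) * (B * (K * σ * Real.sqrt R)) := by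
            refine mul_le_mul hDf ?_ (fnorm_nonneg _) h0
            exact le_trans (hSD Dm) (mul_le_mul_of_nonneg_left hDf hBnn)
    have hVn : fnorm V ^ 2 ≤ 1 := by rw [sq_fnorm]; exact hVV
    have hsR : Real.sqrt R ^ 2 = R := Real.sq_sqrt hRnn
    have halg : (K * σ * Real.sqrt R) * (B * (K * σ * Real.sqrt R))
        = K ^ 2 * σ ^ 2 * R * B := by
      calc (K * σ * Real.sqrt R) * (B * (K * σ * Real.sqrt R))
          = K ^ 2 * σ ^ 2 * Real.sqrt R ^ 2 * B := by ring
        _ = K ^ 2 * σ ^ 2 * R * B := by rw [hsR]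
    have hmain : K * σ ^ 2 * B * (2 + K * R) ≤ K * (2 + K * R) ^ 2 * opNorm C * σ ^ 2 := by
      have h2KR : (0:ℝ) ≤ 2 + K * R := by
        have := mul_nonneg hKnn hRnn; linarith
      have ht : 0 ≤ K * σ ^ 2 * opNorm C * (2 + K * R) :=
        mul_nonneg (mul_nonneg (mul_nonneg hKnn (sq_nonneg σ)) hopC) h2KR
      calc K * σ ^ 2 * B * (2 + K * R)
          = (K * σ ^ 2 * opNorm C * (2 + K * R)) * (1 + K * R) := by rw [hBdef]; ring
        _ ≤ (K * σ ^ 2 * opNorm C * (2 + K * R)) * (2 + K * R) := by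
            refine mul_le_mul_of_nonneg_left ?_ ht
            linarith
        _ = K * (2 + K * R) ^ 2 * opNorm C * σ ^ 2 := by ring
    have hb1 : -εH ≤ finner V (S * V) := by
      nlinarith [hsosp, hVn, hεH, sq_nonneg (fnorm V)]
    have hb2 : -(K * σ ^ 2 * B) ≤ finner Dm (S * W) := (abs_le.mp hDSW).1
    have hb3 : finner Dm (S * Dm) ≤ (K * σ * Real.sqrt R) * (B * (K * σ * Real.sqrt R)) :=
      le_trans (le_abs_self _) hDSD
    rw [← hq]
    have hc₀' : c₀ = εH + K * (2 + K * R) ^ 2 * opNorm C * σ ^ 2 := hc₀def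
    have hexpand2 : K * σ ^ 2 * B * (2 + K * R) = 2 * (K * σ ^ 2 * B) + K ^ 2 * σ ^ 2 * R * B := by
      ring
    linarith [hdecomp, hb1, hb2, hb3, halg, hmain, hexpand2]
  have hquad : ∀ x : Fin n → 𝕂,
      -(c₀ * vnorm x ^ 2) ≤ RCLike.re (dotProduct (star x) (S *ᵥ x)) := by
    intro x
    rcases eq_or_ne (vnorm x) 0 with h0 | h0
    · have hx0 : x = 0 := vnorm_zero_imp x h0
      rw [h0, hx0]
      simp [Matrix.mulVec_zero, dotProduct_zero]
    · have ht : 0 < vnorm x := lt_of_le_of_ne (vnorm_nonneg x) (Ne.symm h0)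
      set t : ℝ := vnorm x with htdef
      set v : Fin n → 𝕂 := ((t⁻¹ : ℝ) : 𝕂) • x with hvdef
      have hvE : vE v = ((t⁻¹ : ℝ) : 𝕂) • vE x := rfl
      have hvnorm : vnorm v = 1 := by
        rw [vnorm, hvE, norm_smul]
        rw [show ‖((t⁻¹ : ℝ) : 𝕂)‖ = |t⁻¹| from RCLike.norm_ofReal _]
        rw [abs_of_pos (inv_pos.mpr ht)]
        have : ‖vE x‖ = t := rfl
        rw [this]
        field_simp
      have hscale : RCLike.re (dotProduct (star v) (S *ᵥ v)) =
          t⁻¹ ^ 2 * RCLike.re (dotProduct (star x) (S *ᵥ x)) := by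
        rw [hvdef, Matrix.mulVec_smul, star_smul, smul_dotProduct,
          dotProduct_smul]
        rw [RCLike.star_def, RCLike.conj_ofReal]
        rw [smul_smul, ← RCLike.ofReal_mul, ← RCLike.real_smul_eq_coe_smul, RCLike.smul_re]
        ring
      have h1 := hquadUnit v hvnorm
      rw [hscale] at h1
      have ht2 : 0 < t ^ 2 := by positivity
      have h2 := mul_le_mul_of_nonneg_left h1 (le_of_lt ht2)
      have h3 : t ^ 2 * (t⁻¹ ^ 2 * RCLike.re (dotProduct (star x) (S *ᵥ x)))
          = RCLike.re (dotProduct (star x) (S *ᵥ x)) := by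
        field_simp
      rw [h3] at h2
      linarith
  set Sm : Matrix (Fin n) (Fin n) 𝕂 := S + ((c₀ : ℝ) : 𝕂) • 1 with hSmdef
  have hSmH : Sm.IsHermitian := by
    refine hSH.add ?_
    rw [Matrix.IsHermitian, Matrix.conjTranspose_smul, RCLike.star_def, RCLike.conj_ofReal,
      Matrix.conjTranspose_one]
  have hSmquad : ∀ x : Fin n → 𝕂,
      0 ≤ RCLike.re (dotProduct (star x) (Sm *ᵥ x)) := by
    intro x
    have h1 : Sm *ᵥ x = S *ᵥ x + ((c₀ : ℝ) : 𝕂) • x := by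
      rw [hSmdef, Matrix.add_mulVec, Matrix.smul_mulVec, Matrix.one_mulVec]
    rw [h1, dotProduct_add, map_add]
    have h2 : RCLike.re (dotProduct (star x) (((c₀ : ℝ) : 𝕂) • x))
        = c₀ * vnorm x ^ 2 := by
      rw [dotProduct_smul, smul_eq_mul, dot_self_eq, ← RCLike.ofReal_mul,
        RCLike.ofReal_re]
    rw [h2]
    linarith [hquad x]
  have hone_quad : ∀ x : Fin n → 𝕂,
      0 ≤ RCLike.re (dotProduct (star x) ((1 : Matrix (Fin n) (Fin n) 𝕂) *ᵥ x)) := by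
    intro x
    rw [Matrix.one_mulVec, dot_self_eq, RCLike.ofReal_re]
    positivity
  have hSX : ∀ X ∈ SDPSet A b, -(c₀ * R) ≤ finner S X := by
    intro X hX
    have h1 : 0 ≤ finner Sm X := finner_nonneg_of_quadform hSmH hSmquad hX.1
    have h2 : finner Sm X = finner S X + c₀ * finner 1 X := by
      rw [hSmdef, finner_add_left, finner_smul_left]
    have h3 : finner 1 X ≤ R := by rw [finner_one_left]; exact hR X hX
    have h4 : 0 ≤ finner 1 X :=
      finner_nonneg_of_quadform Matrix.isHermitian_one hone_quad hX.1
    nlinarith [hc₀nn]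
  have hCdec : C = S + Mlam := by rw [hSsub]; abel
  have hgap : ∀ X ∈ SDPSet A b,
      finner C (Y * Yᴴ) - finner C X = finner S (Y * Yᴴ) - finner S X := by
    intro X hX
    have h1 : finner Mlam (Y * Yᴴ) = finner Mlam X := by
      rw [hMlamdef, calAstar, finner_sum_left, finner_sum_left]
      apply Finset.sum_congr rfl
      intro i _
      rw [hYmem i, hX.2 i]
    rw [hCdec, finner_add_left, finner_add_left]
    linarith [h1]
  have hSYY : finner S (Y * Yᴴ) ≤ εg / 2 * Real.sqrt R := by
    have h1 : finner S (Y * Yᴴ) = finner (S * Y) Y := (finner_CY_Y S Y).symm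
    have h2 : fnorm ((2 : 𝕂) • (S * Y)) ≤ εg := hY.1.2
    have h3 : fnorm ((2 : 𝕂) • (S * Y)) = 2 * fnorm (S * Y) := by
      rw [show ((2 : 𝕂)) = (((2 : ℝ)) : 𝕂) by norm_cast, fnorm_real_smul]
      norm_num
    rw [h3] at h2
    have h4 : fnorm (S * Y) ≤ εg / 2 := by linarith
    calc finner S (Y * Yᴴ) = finner (S * Y) Y := h1
      _ ≤ fnorm (S * Y) * fnorm Y := finner_le _ _
      _ ≤ (εg / 2) * Real.sqrt R :=
          mul_le_mul h4 hfY (fnorm_nonneg _) (by linarith [hεg])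
  have himg_ne : ((fun X => finner C X) '' SDPSet A b).Nonempty := hCne.image _
  have hbdd : BddBelow ((fun X => finner C X) '' SDPSet A b) := by
    refine ⟨-(fnorm C * R), ?_⟩
    rintro y ⟨X, hX, rfl⟩
    have h1 : |finner C X| ≤ fnorm C * fnorm X := abs_finner_le _ _
    have h2 : fnorm X ≤ R := le_trans (fnorm_psd_le_trace hX.1) (hR X hX)
    have h3 : fnorm C * fnorm X ≤ fnorm C * R :=
      mul_le_mul_of_nonneg_left h2 (fnorm_nonneg _)
    have h5 := (abs_le.mp h1).1
    dsimp only
    linarith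
  have hCYY : finner (C * Y) Y = finner C (Y * Yᴴ) := finner_CY_Y C Y
  clear_value σ lam Mlam S B c₀ Sm
  constructor
  · have h1 : sInf ((fun X => finner C X) '' SDPSet A b) ≤ finner C (Y * Yᴴ) :=
      csInf_le hbdd ⟨Y * Yᴴ, hYY, rfl⟩
    rw [hCYY]
    linarith
  · have h2 : ∀ y ∈ (fun X => finner C X) '' SDPSet A b,
        finner C (Y * Yᴴ) - (c₀ * R + εg / 2 * Real.sqrt R) ≤ y := by
      rintro y ⟨X, hX, rfl⟩
      have h3 := hgap X hX
      have h4 := hSX X hX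
      dsimp only
      linarith [hSYY]
    have h5 := le_csInf himg_ne h2
    have hc₀R : c₀ * R = (εH + K * (2 + K * R) ^ 2 * opNorm C * σ ^ 2) * R := by
      rw [hc₀def]
    rw [hCYY]
    linarith [h5, hc₀R]


end SmoothedBM
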